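/- In the setting of the previous proposition, if ξ ∈ D^i satisfies ∂(ξ) = 0 and ξ ∈ π^s C^i, then in H^i(D^•) one has [ξ] = ∑_{k=1}^d c_k [ξ_k] with all coefficients c_k ∈ π^s O. -/

import Mathlib

/-- In the setting of the previous proposition (`H^{i+1}(C^•)` = free with basis
`[ξ_1], …, [ξ_dd]` ⊕ torsion, `D^• = ⋃_s π^s C^•`): if `ξ ∈ D^{i+1}` satisfies
`dξ = 0` and `ξ ∈ π^s C^{i+1}` (i.e. `π^{-s} ξ ∈ C^{i+1}`, `s ∈ ℤ`), then in
`H^{i+1}(D^•)` one has `[ξ] = ∑_k c_k [ξ_k]` with all coefficients `c_k ∈ π^s O`. -/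
theorem stmt8
    (O : Type) [CommRing O] [IsDomain O] [IsDiscreteValuationRing O]
    (π : O) (hπ : Irreducible π)
    [IsAdicComplete (Ideal.span {π}) O]
    (Λ : Type) [Field Λ] [Algebra O Λ] [IsFractionRing O Λ]
    (D : ℤ → Type) [∀ i, AddCommGroup (D i)] [∀ i, Module Λ (D i)]
    [∀ i, Module O (D i)] [∀ i, IsScalarTower O Λ (D i)]
    (dD : ∀ i, D i →ₗ[Λ] D (i + 1))
    (hdd : ∀ i (x : D i), dD (i + 1) (dD i x) = 0)
    (C : ∀ i, Submodule O (D i))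
    (hCd : ∀ i, ∀ x ∈ C i, dD i x ∈ C (i + 1))
    (hunion : ∀ i (x : D i), ∃ s : ℕ, π ^ s • x ∈ C i)
    (i : ℤ) (dd e : ℕ)
    (ξ : Fin dd → D (i + 1)) (hξC : ∀ k, ξ k ∈ C (i + 1))
    (hξd : ∀ k, dD (i + 1) (ξ k) = 0)
    (η : Fin e → D (i + 1)) (hηC : ∀ l, η l ∈ C (i + 1))
    (hηd : ∀ l, dD (i + 1) (η l) = 0)
    -- the classes of the `ξ_k` and `η_l` span `H^{i+1}(C^•)` over `O`:
    (hspan : ∀ ω ∈ C (i + 1), dD (i + 1) ω = 0 →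
      ∃ (c : Fin dd → O) (c' : Fin e → O) (ζ : D i), ζ ∈ C i ∧
        ω = ∑ k, c k • ξ k + ∑ l, c' l • η l + dD i ζ)
    -- `H` is free with basis the `[ξ_k]`, and the sum `H ⊕ H'` is direct:
    (hfree : ∀ (c : Fin dd → O) (c' : Fin e → O),
      (∃ ζ ∈ C i, ∑ k, c k • ξ k + ∑ l, c' l • η l = dD i ζ) → ∀ k, c k = 0)
    -- the classes `[η_l]` are torsion:
    (htors : ∀ l, ∃ (t : ℕ), ∃ ζ ∈ C i, (π ^ t : O) • η l = dD i ζ)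
    (s : ℤ) (ω : D (i + 1)) (hω : dD (i + 1) ω = 0)
    (hωC : ((algebraMap O Λ π) ^ (-s) : Λ) • ω ∈ C (i + 1)) :
    ∃ (a : Fin dd → Λ) (ζ : D i),
      ω = ∑ k, a k • ξ k + dD i ζ ∧
      ∀ k, ∃ c : O, a k = ((algebraMap O Λ π) ^ s : Λ) * algebraMap O Λ c := by
  set p : Λ := algebraMap O Λ π with hp
  have hp0 : p ≠ 0 := by
    simpa [hp] using (map_ne_zero_iff _ (IsFractionRing.injective O Λ)).mpr hπ.ne_zero
  have hω'd : dD (i + 1) ((p ^ (-s) : Λ) • ω) = 0 := by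
    rw [map_smul, hω, smul_zero]
  obtain ⟨c, c', ζ, hζC, heq⟩ := hspan _ hωC hω'd
  choose t ζl hζlC hζl using htors
  refine ⟨fun k => p ^ s * algebraMap O Λ (c k),
    (p ^ s : Λ) • (ζ + ∑ l, (algebraMap O Λ (c' l) * ((p : Λ) ^ (t l))⁻¹) • ζl l), ?_, ?_⟩
  · have hζl' : ∀ l, dD i (ζl l) = ((p : Λ) ^ (t l)) • η l := by
      intro l
      rw [← hζl l, ← algebraMap_smul Λ (π ^ t l) (η l), map_pow]
    have hdZ : dD i (ζ + ∑ l, (algebraMap O Λ (c' l) * ((p : Λ) ^ (t l))⁻¹) • ζl l)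
        = dD i ζ + ∑ l, c' l • η l := by
      rw [map_add, map_sum]
      congr 1
      refine Finset.sum_congr rfl fun l _ => ?_
      rw [map_smul, hζl' l, smul_smul, mul_assoc,
        inv_mul_cancel₀ (pow_ne_zero _ hp0), mul_one, algebraMap_smul]
    have key : (p ^ s : Λ) • ((p ^ (-s) : Λ) • ω) = ω := by
      rw [smul_smul, ← zpow_add₀ hp0, add_neg_cancel, zpow_zero, one_smul]
    calc ω = (p ^ s : Λ) • ((p ^ (-s) : Λ) • ω) := key.symm
      _ = (p ^ s : Λ) • (∑ k, c k • ξ k + ∑ l, c' l • η l + dD i ζ) := by rw [heq]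
      _ = _ := by
          rw [map_smul, hdZ, smul_add, smul_add, Finset.smul_sum, smul_add]
          rw [add_assoc, add_comm ((p ^ s : Λ) • ∑ l, c' l • η l)]
          congr 1
          refine Finset.sum_congr rfl fun k _ => ?_
          rw [mul_smul, algebraMap_smul]
  · intro k; exact ⟨c k, rfl⟩
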